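/- Let p, q ≡ 1 (mod 8) be distinct primes and let π = a + b√2, λ = c + d√2 ∈ ℤ[√2] have norms p and q respectively, with π ≡ λ ≡ 1 (mod 2). Then the quadratic residue symbols satisfy the reciprocity law [π/λ] = [λ/π]. -/

import Mathlib

open Classical in
/-- The quadratic residue symbol `[α/π]`: `1` if `α` is a square modulo `π`, `-1` otherwise. -/
noncomputable def qr {R : Type*} [CommRing R] (α π : R) : ℤ :=
  if ∃ τ : R, π ∣ α - τ ^ 2 then 1 else -1

-- a prime is not a perfect square
lemma prime_not_sq {p n : ℕ} (hp : p.Prime) (h : n ^ 2 = p) : False := by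
  have hd : n ∣ p := ⟨n, by rw [← h]; ring⟩
  rcases (Nat.Prime.eq_one_or_self_of_dvd hp n hd) with h1 | h1
  · subst h1; simp at h; subst h; exact hp.one_lt.ne' rfl
  · subst h1; nlinarith [hp.two_le]

-- the key Jacobi symbol computation
lemma jacobi_aux (N : ℕ) (hN : N % 8 = 1) (e f : ℤ) (hef : e ^ 2 - 2 * f ^ 2 = (N : ℤ))
    (hf : f ≠ 0) (hcop : IsCoprime e f) : jacobiSym f N = 1 := by
  have hN4 : N % 4 = 1 := by omega
  have hNodd : Odd N := by by_contra hc; rw [Nat.odd_iff] at hc; omega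
  obtain ⟨k, m, hmodd, hfm⟩ := Nat.exists_eq_two_pow_mul_odd (Int.natAbs_ne_zero.mpr hf)
  have hmf : (m : ℤ) ∣ f := by
    rcases Int.natAbs_eq f with h | h
    · rw [h, hfm]; exact ⟨2 ^ k, by push_cast; ring⟩
    · rw [h, hfm]; exact ⟨-2 ^ k, by push_cast; ring⟩
  -- reduce to J(m | N)
  have h2 : jacobiSym 2 N = 1 := by
    rw [jacobiSym.at_two hNodd, ZMod.χ₈_nat_eq_if_mod_eight]
    have h21 : N % 2 = 1 := by omega
    simp [hN, h21]
  have hneg1 : jacobiSym (-1) N = 1 := by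
    rw [jacobiSym.at_neg_one hNodd, ZMod.χ₄_nat_one_mod_four hN4]
  have habs : jacobiSym f N = jacobiSym (m : ℤ) N := by
    rcases Int.natAbs_eq f with h | h
    · rw [h, hfm]
      push_cast
      rw [jacobiSym.mul_left, jacobiSym.pow_left, h2, one_pow, one_mul]
    · rw [h, hfm]
      push_cast
      rw [show (-(2 ^ k * (m:ℤ))) = (-1) * (2:ℤ) ^ k * (m:ℤ) by ring,
        jacobiSym.mul_left, jacobiSym.mul_left, hneg1,
        jacobiSym.pow_left, h2, one_pow, one_mul, one_mul]
  rw [habs]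
  rw [show ((m : ℤ)) = ((m : ℕ) : ℤ) by norm_num,
    jacobiSym.quadratic_reciprocity_one_mod_four' hmodd hN4]
  have hmod : ((N : ℤ)) % (m:ℕ) = (e ^ 2) % (m:ℕ) := by
    have hdvd : (m : ℤ) ∣ e ^ 2 - (N : ℤ) := by
      have : e ^ 2 - (N : ℤ) = 2 * f ^ 2 := by linarith
      rw [this]
      exact Dvd.dvd.mul_left (hmf.trans ⟨f, (sq f)⟩) 2
    exact Int.modEq_iff_dvd.mpr hdvd
  rw [jacobiSym.mod_left' hmod]
  apply jacobiSym.sq_one'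
  rw [← Int.isCoprime_iff_gcd_eq_one]
  exact hcop.of_isCoprime_of_dvd_right hmf

-- coprimality of a representation a^2 - 2b^2 = prime
lemma rep_coprime {p : ℕ} (hp : p.Prime) {a b : ℤ} (h : a ^ 2 - 2 * b ^ 2 = (p : ℤ)) :
    IsCoprime a b := by
  rw [Int.isCoprime_iff_gcd_eq_one]
  by_contra hg
  set g := Int.gcd a b with hgdef
  have hga : (g : ℤ) ∣ a := Int.gcd_dvd_left a b
  have hgb : (g : ℤ) ∣ b := Int.gcd_dvd_right a b
  have hsq : ((g : ℤ)) ^ 2 ∣ (p : ℤ) := by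
    rw [← h]
    exact dvd_sub (pow_dvd_pow_of_dvd hga 2) (Dvd.dvd.mul_left (pow_dvd_pow_of_dvd hgb 2) 2)
  have hsqn : g ^ 2 ∣ p := by exact_mod_cast hsq
  rcases (Nat.Prime.eq_one_or_self_of_dvd hp _ hsqn) with h1 | h1
  · exact hg (by nlinarith [sq_nonneg (g-1)] : g = 1)
  · exact prime_not_sq hp h1

lemma b_ne_zero {p : ℕ} (hp : p.Prime) {a b : ℤ} (h : a ^ 2 - 2 * b ^ 2 = (p : ℤ)) :
    b ≠ 0 := by
  rintro rfl
  have : a ^ 2 = (p : ℤ) := by linarith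
  have : a.natAbs ^ 2 = p := by
    have := congrArg Int.natAbs this
    rwa [Int.natAbs_pow, Int.natAbs_natCast] at this
  exact prime_not_sq hp this

-- legendreSym p b = 1 for p = a² - 2b², p ≡ 1 mod 8
lemma legendre_b {p : ℕ} (hp : p.Prime) (hp8 : p % 8 = 1) {a b : ℤ}
    (h : a ^ 2 - 2 * b ^ 2 = (p : ℤ)) [Fact p.Prime] : legendreSym p b = 1 := by
  rw [jacobiSym.legendreSym.to_jacobiSym]
  exact jacobi_aux p hp8 a b h (b_ne_zero hp h) (rep_coprime hp h)

-- q does not divide d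
lemma not_dvd_d {q : ℕ} (hq : q.Prime) {c d : ℤ} (h : c ^ 2 - 2 * d ^ 2 = (q : ℤ)) :
    ¬ (q : ℤ) ∣ d := by
  intro hd
  have hqp : Prime (q : ℤ) := Int.prime_iff_natAbs_prime.mpr (by simpa using hq)
  have hc2 : (q : ℤ) ∣ c ^ 2 := by
    have : c ^ 2 = (q : ℤ) + 2 * d ^ 2 := by linarith
    rw [this]
    exact dvd_add (dvd_refl _) (Dvd.dvd.mul_left (hd.trans (dvd_pow_self d two_ne_zero)) 2)
  have hc : (q : ℤ) ∣ c := hqp.dvd_of_dvd_pow hc2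
  have hq2 : (q : ℤ) ^ 2 ∣ (q : ℤ) := by
    have h2 : (q : ℤ) ^ 2 ∣ c ^ 2 - 2 * d ^ 2 :=
      dvd_sub (pow_dvd_pow_of_dvd hc 2) (Dvd.dvd.mul_left (pow_dvd_pow_of_dvd hd 2) 2)
    rwa [h] at h2
  have : q ^ 2 ∣ q := by exact_mod_cast hq2
  have := Nat.le_of_dvd hq.pos this
  nlinarith [hq.two_le]

-- q does not divide a*d - b*c
lemma not_dvd_f {p q : ℕ} (hp : p.Prime) (hq : q.Prime) (hpq : p ≠ q) {a b c d : ℤ}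
    (hpi : a ^ 2 - 2 * b ^ 2 = (p : ℤ)) (hla : c ^ 2 - 2 * d ^ 2 = (q : ℤ)) :
    ¬ (q : ℤ) ∣ (a * d - b * c) := by
  intro hdvd
  haveI : Fact q.Prime := ⟨hq⟩
  have hD : ((d : ZMod q)) ≠ 0 := by
    rw [Ne, ZMod.intCast_zmod_eq_zero_iff_dvd]
    exact not_dvd_d hq hla
  have hC : (c : ZMod q) ^ 2 = 2 * (d : ZMod q) ^ 2 := by
    have := congrArg (fun z : ℤ => (z : ZMod q)) hla
    push_cast at this
    rw [ZMod.natCast_self] at this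
    linear_combination this
  have hAD : (a : ZMod q) * d = (b : ZMod q) * c := by
    have := (ZMod.intCast_zmod_eq_zero_iff_dvd _ q).mpr hdvd
    push_cast at this
    linear_combination this
  have hP : ((p : ℕ) : ZMod q) * (d : ZMod q) ^ 2 = 0 := by
    have := congrArg (fun z : ℤ => (z : ZMod q)) hpi
    push_cast at this
    calc ((p : ℕ) : ZMod q) * (d : ZMod q) ^ 2
        = ((a : ZMod q) ^ 2 - 2 * (b : ZMod q) ^ 2) * (d : ZMod q) ^ 2 := by rw [← this]
      _ = ((a : ZMod q) * d) ^ 2 - 2 * (b : ZMod q) ^ 2 * (d : ZMod q) ^ 2 := by ring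
      _ = ((b : ZMod q) * c) ^ 2 - 2 * (b : ZMod q) ^ 2 * (d : ZMod q) ^ 2 := by rw [hAD]
      _ = (b : ZMod q) ^ 2 * ((c : ZMod q) ^ 2 - 2 * (d : ZMod q) ^ 2) := by ring
      _ = 0 := by rw [hC]; ring
  have hp0 : ((p : ℕ) : ZMod q) = 0 := by
    rcases mul_eq_zero.mp hP with h | h
    · exact h
    · exact absurd (pow_eq_zero_iff two_ne_zero |>.mp h) hD
  have : q ∣ p := (ZMod.natCast_eq_zero_iff _ _).mp hp0
  exact hpq ((Nat.prime_dvd_prime_iff_eq hq hp).mp this).symm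

-- coprimality of e = ac - 2bd and f = ad - bc
lemma ef_coprime {p q : ℕ} (hp : p.Prime) (hq : q.Prime) (hpq : p ≠ q) {e f : ℤ}
    (hef : e ^ 2 - 2 * f ^ 2 = ((p * q : ℕ) : ℤ)) : IsCoprime e f := by
  rw [Int.isCoprime_iff_gcd_eq_one]
  by_contra hg
  obtain ⟨r, hr, hrg⟩ := Nat.exists_prime_and_dvd hg
  have hre : (r : ℤ) ∣ e := dvd_trans (Int.natCast_dvd_natCast.mpr hrg) (Int.gcd_dvd_left e f)
  have hrf : (r : ℤ) ∣ f := dvd_trans (Int.natCast_dvd_natCast.mpr hrg) (Int.gcd_dvd_right e f)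
  have hr2 : ((r : ℤ)) ^ 2 ∣ ((p * q : ℕ) : ℤ) := by
    rw [← hef]
    exact dvd_sub (pow_dvd_pow_of_dvd hre 2) (Dvd.dvd.mul_left (pow_dvd_pow_of_dvd hrf 2) 2)
  have hr2n : r ^ 2 ∣ p * q := by exact_mod_cast hr2
  have hrpq : r ∣ p * q := dvd_trans (dvd_pow_self r two_ne_zero) hr2n
  rcases (Nat.Prime.dvd_mul hr).mp hrpq with h | h
  · have hrp : r = p := (Nat.prime_dvd_prime_iff_eq hr hp).mp h
    subst hrp
    have : r * r ∣ r * q := by rwa [← pow_two]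
    have : r ∣ q := (mul_dvd_mul_iff_left hr.pos.ne').mp this
    exact hpq ((Nat.prime_dvd_prime_iff_eq hr hq).mp this)
  · have hrq : r = q := (Nat.prime_dvd_prime_iff_eq hr hq).mp h
    subst hrq
    have : r * r ∣ p * r := by rwa [← pow_two]
    have : r ∣ p := by
      have h2 : r * r ∣ r * p := by rwa [mul_comm p r] at this
      exact (mul_dvd_mul_iff_left hr.pos.ne').mp h2
    exact hpq (((Nat.prime_dvd_prime_iff_eq hr hp).mp this).symm)

-- the central reciprocity computation: legendreSym p f = legendreSym q f
lemma legendre_f_eq {p q : ℕ} (hp : p.Prime) (hq : q.Prime) (hpq : p ≠ q)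
    (hp8 : p % 8 = 1) (hq8 : q % 8 = 1) {a b c d : ℤ}
    (hpi : a ^ 2 - 2 * b ^ 2 = (p : ℤ)) (hla : c ^ 2 - 2 * d ^ 2 = (q : ℤ))
    [Fact p.Prime] [Fact q.Prime] :
    legendreSym p (a * d - b * c) = legendreSym q (a * d - b * c) := by
  set f : ℤ := a * d - b * c with hfdef
  set e : ℤ := a * c - 2 * b * d with hedef
  have hef : e ^ 2 - 2 * f ^ 2 = ((p * q : ℕ) : ℤ) := by
    push_cast
    linear_combination (c ^ 2 - 2 * d ^ 2) * hpi + (p : ℤ) * hla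
  have hqf : ¬ (q : ℤ) ∣ f := not_dvd_f hp hq hpq hpi hla
  have hpf : ¬ (p : ℤ) ∣ f := by
    have h := not_dvd_f hq hp (Ne.symm hpq) hla hpi
    intro hc
    exact h (by rw [show c * b - d * a = -f by ring]; exact dvd_neg.mpr hc)
  have hfne : f ≠ 0 := fun h0 => hqf (h0 ▸ dvd_zero _)
  have hcop : IsCoprime e f := ef_coprime hp hq hpq hef
  have hN8 : (p * q) % 8 = 1 := by
    rw [Nat.mul_mod, hp8, hq8]
  have hJ : jacobiSym f (p * q) = 1 := jacobi_aux (p * q) hN8 e f hef hfne hcop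
  rw [jacobiSym.mul_right f p q] at hJ
  rw [← jacobiSym.legendreSym.to_jacobiSym, ← jacobiSym.legendreSym.to_jacobiSym] at hJ
  have hne : ((f : ZMod p)) ≠ 0 := by
    rw [Ne, ZMod.intCast_zmod_eq_zero_iff_dvd]; exact hpf
  have h1 := legendreSym.eq_one_or_neg_one p hne
  rcases h1 with h | h <;> rw [h] at hJ ⊢ <;> linarith

-- divisibility in ℤ√2 from component congruences
lemma zsqrtd_dvd_of_comp {q : ℕ} (hq0 : 0 < q) {c d x y : ℤ}
    (h : c ^ 2 - 2 * d ^ 2 = (q : ℤ))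
    (h1 : (q : ℤ) ∣ c * x - 2 * d * y) (h2 : (q : ℤ) ∣ c * y - d * x) :
    (⟨c, d⟩ : Zsqrtd 2) ∣ ⟨x, y⟩ := by
  obtain ⟨u, hu⟩ := h1
  obtain ⟨v, hv⟩ := h2
  refine ⟨⟨u, v⟩, ?_⟩
  have hqz : (q : ℤ) ≠ 0 := by exact_mod_cast hq0.ne'
  have hre : x = c * u + 2 * (d * v) := by
    apply mul_left_cancel₀ hqz
    linear_combination c * hu + 2 * d * hv - x * h
  have him : y = c * v + d * u := by
    apply mul_left_cancel₀ hqz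
    linear_combination c * hv + d * hu - y * h
  ext
  · simp only [Zsqrtd.re_mul]; linarith [hre]
  · simp only [Zsqrtd.im_mul]; linarith [him]

open Classical in
lemma qr_eq {q : ℕ} (hq : q.Prime) [Fact q.Prime] {a b c d : ℤ}
    (hla : c ^ 2 - 2 * d ^ 2 = (q : ℤ))
    (hf : ¬ (q : ℤ) ∣ (a * d - b * c)) :
    qr (⟨a, b⟩ : Zsqrtd 2) (⟨c, d⟩ : Zsqrtd 2) = legendreSym q ((a * d - b * c) * d) := by
  have hqprime : Prime (q : ℤ) := Int.prime_iff_natAbs_prime.mpr (by simpa using hq)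
  have hd : ¬ (q : ℤ) ∣ d := not_dvd_d hq hla
  have hD : ((d : ZMod q)) ≠ 0 := by
    rw [Ne, ZMod.intCast_zmod_eq_zero_iff_dvd]; exact hd
  have hC2 : (c : ZMod q) ^ 2 = 2 * (d : ZMod q) ^ 2 := by
    have := congrArg (fun z : ℤ => (z : ZMod q)) hla
    push_cast at this
    rw [ZMod.natCast_self] at this
    linear_combination this
  set w : ZMod q := -(c : ZMod q) * (d : ZMod q)⁻¹ with hwdef
  have hw : w * w = ((2 : ℤ) : ZMod q) := by
    push_cast
    rw [hwdef]
    field_simp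
    linear_combination hC2
  set φ : Zsqrtd 2 →+* ZMod q := Zsqrtd.lift ⟨w, hw⟩ with hφdef
  have hφ : ∀ x y : ℤ, φ (⟨x, y⟩ : Zsqrtd 2) = (x : ZMod q) + (y : ZMod q) * w := by
    intro x y
    simp [hφdef, Zsqrtd.lift]
  have hφint : ∀ n : ℤ, φ ((n : ℤ) : Zsqrtd 2) = (n : ZMod q) := fun n => map_intCast φ n
  have hφlam : φ (⟨c, d⟩ : Zsqrtd 2) = 0 := by
    rw [hφ, hwdef]
    field_simp
    ring
  -- kernel property
  have hker : ∀ β : Zsqrtd 2, φ β = 0 → (⟨c, d⟩ : Zsqrtd 2) ∣ β := by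
    intro β hβ
    obtain ⟨x, y⟩ := β
    rw [hφ, hwdef] at hβ
    have hxy : ((d * x - c * y : ℤ) : ZMod q) = 0 := by
      push_cast
      have := congrArg (fun z => z * (d : ZMod q)) hβ
      simp only [zero_mul] at this
      field_simp at this
      linear_combination this
    have hdvd1 : (q : ℤ) ∣ d * x - c * y := (ZMod.intCast_zmod_eq_zero_iff_dvd _ q).mp hxy
    have hdvd2 : (q : ℤ) ∣ c * x - 2 * d * y := by
      have hmul : (q : ℤ) ∣ d * (c * x - 2 * d * y) := by
        have : d * (c * x - 2 * d * y) = c * (d * x - c * y) + (c ^ 2 - 2 * d ^ 2) * y := by ring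
        rw [this, hla]
        exact dvd_add (Dvd.dvd.mul_left hdvd1 c) (Dvd.dvd.mul_right (dvd_refl _) y)
      rcases (hqprime.dvd_mul.mp hmul) with h | h
      · exact absurd h hd
      · exact h
    exact zsqrtd_dvd_of_comp hq.pos hla hdvd2 (by
      have : c * y - d * x = -(d * x - c * y) := by ring
      rw [this]; exact dvd_neg.mpr hdvd1)
  -- value of φ at π
  have hφpi : φ (⟨a, b⟩ : Zsqrtd 2) = ((a * d - b * c : ℤ) : ZMod q) * ((d : ZMod q)⁻¹) := by
    rw [hφ, hwdef]
    push_cast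
    field_simp
    ring
  have hfz : ((a * d - b * c : ℤ) : ZMod q) ≠ 0 := by
    rw [Ne, ZMod.intCast_zmod_eq_zero_iff_dvd]; exact hf
  have hval : (((a * d - b * c) * d : ℤ) : ZMod q) ≠ 0 := by
    push_cast
    push_cast at hfz
    exact mul_ne_zero hfz hD
  -- the two sides agree
  unfold qr
  split_ifs with hex
  · -- π is a square mod λ
    obtain ⟨τ, hτ⟩ := hex
    obtain ⟨μ, hμ⟩ := hτ
    have h0 : φ (⟨a, b⟩ : Zsqrtd 2) = (φ τ) ^ 2 := by
      have := congrArg φ hμ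
      rw [map_sub, map_mul, hφlam, zero_mul, sub_eq_zero, map_pow] at this
      exact this
    symm
    rw [legendreSym.eq_one_iff q hval]
    refine ⟨φ τ * (d : ZMod q), ?_⟩
    push_cast
    push_cast at h0 hφpi
    rw [hφpi] at h0
    field_simp at h0
    linear_combination (d : ZMod q) * h0
  · -- π is not a square mod λ
    symm
    rw [legendreSym.eq_neg_one_iff q]
    intro hsq
    obtain ⟨t, ht⟩ := hsq
    apply hex
    set s : ZMod q := t * (d : ZMod q)⁻¹ with hsdef
    refine ⟨(((s : ZMod q).val : ℤ) : Zsqrtd 2), ?_⟩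
    apply hker
    rw [map_sub, map_pow, hφint]
    have hsv : (((s.val : ℤ)) : ZMod q) = s := by
      push_cast
      rw [ZMod.natCast_val, ZMod.cast_id]
    rw [hsv, hφpi, hsdef]
    push_cast at ht ⊢
    rw [sub_eq_zero]
    apply mul_right_cancel₀ (pow_ne_zero 2 hD)
    have hd' : (d : ZMod q) * (d : ZMod q)⁻¹ = 1 := mul_inv_cancel₀ hD
    linear_combination ht + (((a : ZMod q) * d - b * c) * d - t ^ 2 * ((d : ZMod q) * (d : ZMod q)⁻¹ + 1)) * hd'

/-- Reciprocity in `ℤ[√2]`: for distinct primes `p, q ≡ 1 (mod 8)` and `π = a + b√2`,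
`λ = c + d√2` of norms `p`, `q` with `π ≡ λ ≡ 1 (mod 2)`, one has `[π/λ] = [λ/π]`. -/
theorem stmt3 (p q : ℕ) (hp : p.Prime) (hq : q.Prime) (hpq : p ≠ q)
    (hp8 : p % 8 = 1) (hq8 : q % 8 = 1) (a b c d : ℤ)
    (hpi : a ^ 2 - 2 * b ^ 2 = (p : ℤ)) (hla : c ^ 2 - 2 * d ^ 2 = (q : ℤ))
    (h1 : (2 : Zsqrtd 2) ∣ (⟨a, b⟩ : Zsqrtd 2) - 1)
    (h2 : (2 : Zsqrtd 2) ∣ (⟨c, d⟩ : Zsqrtd 2) - 1) :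
    qr (⟨a, b⟩ : Zsqrtd 2) (⟨c, d⟩ : Zsqrtd 2) = qr (⟨c, d⟩ : Zsqrtd 2) (⟨a, b⟩ : Zsqrtd 2) := by
  haveI : Fact p.Prime := ⟨hp⟩
  haveI : Fact q.Prime := ⟨hq⟩
  have hqf : ¬ (q : ℤ) ∣ (a * d - b * c) := not_dvd_f hp hq hpq hpi hla
  have hpf' : ¬ (p : ℤ) ∣ (c * b - d * a) := not_dvd_f hq hp (Ne.symm hpq) hla hpi
  rw [qr_eq hq hla hqf, qr_eq hp hpi hpf']
  rw [legendreSym.mul, legendreSym.mul]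
  rw [legendre_b hq hq8 hla, legendre_b hp hp8 hpi, mul_one, mul_one]
  have hp2 : p ≠ 2 := by omega
  have hneg : legendreSym p (c * b - d * a) = legendreSym p (a * d - b * c) := by
    rw [show c * b - d * a = (-1) * (a * d - b * c) by ring, legendreSym.mul,
      legendreSym.at_neg_one hp2, ZMod.χ₄_nat_one_mod_four (by omega : p % 4 = 1), one_mul]
  rw [hneg]
  exact (legendre_f_eq hp hq hpq hp8 hq8 hpi hla).symm
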